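/- Define φ_{h,d}(s) = ∑_{k=1}^{d-1} e(ks/d) / ((1 - e(kh/d))(1 - e(-k/d))) for an integer d ≥ 1, an integer h coprime to d, and s ∈ ℤ, where e(x) = exp(2πi x). Then φ_{h,d}(s) = d·∑_{u=0}^{d-1} (u/d - (d-1)/(2d))·({(hu+s)/d} - (d-1)/(2d)), where {x} denotes the fractional part of x. -/

import Mathlib

/-- `e(x) = exp(2πi x)`. -/
noncomputable def ee (x : ℝ) : ℂ := Complex.exp (2 * Real.pi * Complex.I * x)

/-- The generalized Dedekind sum
`φ_{h,d}(s) = ∑_{k=1}^{d-1} e(ks/d) / ((1 - e(kh/d)) (1 - e(-k/d)))`. -/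
noncomputable def phi (h : ℤ) (d : ℕ) (s : ℤ) : ℂ :=
  ∑ k ∈ Finset.Ico 1 d,
    ee ((k : ℝ) * (s : ℝ) / d) /
      ((1 - ee ((k : ℝ) * (h : ℝ) / d)) * (1 - ee (-(k : ℝ) / d)))

open Finset Complex

noncomputable def Ed (d : ℕ) (m : ℤ) : ℂ := Complex.exp (2 * Real.pi * Complex.I * m / d)




lemma Ed_add (d : ℕ) (m n : ℤ) : Ed d (m + n) = Ed d m * Ed d n := by
  rw [Ed, Ed, Ed, ← Complex.exp_add]
  congr 1
  push_cast
  ring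

lemma Ed_pow (d : ℕ) (m : ℤ) (v : ℕ) : Ed d m ^ v = Ed d (m * v) := by
  rw [Ed, Ed, ← Complex.exp_nat_mul]
  congr 1
  push_cast
  ring

lemma Ed_eq_one_iff (d : ℕ) (hd : 0 < d) (m : ℤ) : Ed d m = 1 ↔ (d : ℤ) ∣ m := by
  rw [Ed, Complex.exp_eq_one_iff]
  have hd' : (d : ℂ) ≠ 0 := Nat.cast_ne_zero.2 hd.ne'
  constructor
  · rintro ⟨n, hn⟩
    refine ⟨n, ?_⟩
    have h2 : (2 * (Real.pi : ℂ) * Complex.I) ≠ 0 := by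
      simpa [mul_comm, mul_assoc] using Complex.two_pi_I_ne_zero
    have : (m : ℂ) = (d : ℂ) * n := by
      field_simp at hn
      apply mul_left_cancel₀ h2
      linear_combination (2 * (Real.pi : ℂ) * Complex.I) * hn
    exact_mod_cast this
  · rintro ⟨n, rfl⟩
    refine ⟨n, ?_⟩
    field_simp
    push_cast
    ring

lemma Ed_congr (d : ℕ) (hd : 0 < d) {m n : ℤ} (hmn : (d:ℤ) ∣ m - n) : Ed d m = Ed d n := by
  have : Ed d (n + (m - n)) = Ed d n * Ed d (m - n) := Ed_add d n (m - n)
  rw [(Ed_eq_one_iff d hd _).2 hmn, mul_one] at this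
  simpa using this

lemma Ed_ne_one (d : ℕ) (hd : 0 < d) {m : ℤ} (hm : ¬ (d:ℤ) ∣ m) : (1 : ℂ) - Ed d m ≠ 0 := by
  rw [sub_ne_zero]
  intro hh
  exact hm ((Ed_eq_one_iff d hd m).1 hh.symm)

lemma Ed_ortho (d : ℕ) (hd : 0 < d) (m : ℤ) :
    ∑ u ∈ range d, Ed d (m * u) = if (d:ℤ) ∣ m then (d : ℂ) else 0 := by
  have key : ∀ u ∈ range d, Ed d (m * u) = Ed d m ^ u := fun u _ => (Ed_pow d m u).symm
  rw [Finset.sum_congr rfl key]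
  split_ifs with hdm
  · rw [(Ed_eq_one_iff d hd m).2 hdm]
    simp
  · have hne : Ed d m ≠ 1 := fun hh => hdm ((Ed_eq_one_iff d hd m).1 hh)
    rw [geom_sum_eq hne, Ed_pow, (Ed_eq_one_iff d hd _).2 ⟨m, mul_comm _ _⟩]
    simp


lemma aux_wgeom (x : ℂ) (n : ℕ) :
    (x - 1) * ∑ v ∈ range n, (v : ℂ) * x ^ v
      = ((n : ℂ) - 1) * x ^ n + 1 - ∑ v ∈ range n, x ^ v := by
  induction n with
  | zero => simp
  | succ n ih =>
    rw [Finset.sum_range_succ, Finset.sum_range_succ]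
    push_cast
    ring_nf
    ring_nf at ih
    linear_combination ih

lemma wgeom (x : ℂ) (n : ℕ) (hx : x ≠ 1) (hxn : x ^ n = 1) :
    ∑ v ∈ range n, (v : ℂ) * x ^ v = n / (x - 1) := by
  have h1 : x - 1 ≠ 0 := sub_ne_zero.2 hx
  have h2 : ∑ v ∈ range n, x ^ v = 0 := by
    rw [geom_sum_eq hx, hxn]
    simp
  rw [eq_div_iff h1, mul_comm]
  rw [aux_wgeom, hxn, h2]
  ring

lemma Ed_zero (d : ℕ) : Ed d 0 = 1 := by simp [Ed]

lemma Ed_mul_neg (d : ℕ) (m : ℤ) : Ed d m * Ed d (-m) = 1 := by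
  rw [← Ed_add]; simpa using Ed_zero d

lemma not_dvd_of_Ico (d : ℕ) {k : ℕ} (hk : k ∈ Ico 1 d) : ¬ (d:ℤ) ∣ (k:ℤ) := by
  rw [mem_Ico] at hk
  intro hdvd
  rcases hdvd with ⟨t, ht⟩
  have h1 : (1:ℤ) ≤ k := by exact_mod_cast hk.1
  have h2 : (k:ℤ) < d := by exact_mod_cast hk.2
  have hd0 : (0:ℤ) < d := lt_of_le_of_lt (by linarith) h2
  rcases le_or_gt t 0 with h | h
  · nlinarith
  · nlinarith

lemma sawtooth (d : ℕ) (hd : 0 < d) (u : ℕ) (hu : u < d) :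
    (u : ℂ) - ((d:ℂ) - 1) / 2 =
      ∑ k ∈ Ico 1 d, Ed d ((k:ℤ) * ((u:ℤ) + 1)) / (1 - Ed d k) := by
  set c : ℂ := ((d:ℂ) - 1) / 2 with hc
  have hdC : (d:ℂ) ≠ 0 := Nat.cast_ne_zero.2 hd.ne'
  -- orthogonality sum
  have key : ∑ k ∈ range d,
      (∑ v ∈ range d, ((v:ℂ) - c) * Ed d (-(k:ℤ) * v)) * Ed d ((k:ℤ) * u)
      = (d:ℂ) * ((u:ℂ) - c) := by
    have step1 : ∀ k ∈ range d,
        (∑ v ∈ range d, ((v:ℂ) - c) * Ed d (-(k:ℤ) * v)) * Ed d ((k:ℤ) * u)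
        = ∑ v ∈ range d, ((v:ℂ) - c) * Ed d (((u:ℤ) - v) * k) := by
      intro k _
      rw [Finset.sum_mul]
      refine Finset.sum_congr rfl fun v _ => ?_
      rw [mul_assoc, ← Ed_add]
      congr 2
      ring
    rw [Finset.sum_congr rfl step1, Finset.sum_comm]
    have step2 : ∀ v ∈ range d,
        (∑ k ∈ range d, ((v:ℂ) - c) * Ed d (((u:ℤ) - v) * k))
        = ((v:ℂ) - c) * (if ((d:ℤ) ∣ ((u:ℤ) - v)) then (d:ℂ) else 0) := by
      intro v _
      rw [← Finset.mul_sum, Ed_ortho d hd]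
    rw [Finset.sum_congr rfl step2]
    have step3 : ∀ v ∈ range d,
        ((v:ℂ) - c) * (if ((d:ℤ) ∣ ((u:ℤ) - v)) then (d:ℂ) else 0)
        = if v = u then ((v:ℂ) - c) * d else 0 := by
      intro v hv
      rw [mem_range] at hv
      by_cases hvu : v = u
      · subst hvu
        simp
      · rw [if_neg hvu, if_neg, mul_zero]
        rintro ⟨t, ht⟩
        have h2 : (u:ℤ) < d := by exact_mod_cast hu
        have h3 : (v:ℤ) < d := by exact_mod_cast hv
        have h4 : (0:ℤ) ≤ u := Int.natCast_nonneg u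
        have h5 : (0:ℤ) ≤ v := Int.natCast_nonneg v
        have h6 : (u:ℤ) ≠ v := by
          intro hh; exact hvu (by exact_mod_cast hh.symm)
        have hd0 : (0:ℤ) < d := by exact_mod_cast hd
        rcases lt_trichotomy t 0 with h | h | h
        · nlinarith
        · subst h; simp at ht; omega
        · nlinarith
    rw [Finset.sum_congr rfl step3, Finset.sum_ite_eq' (range d) u]
    rw [if_pos (mem_range.2 hu)]
    ring
  -- the k = 0 coefficient vanishes
  have gauss : (∑ v ∈ range d, (v:ℂ)) = (d:ℂ) * ((d:ℂ) - 1) / 2 := by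
    have g0 := Finset.sum_range_id_mul_two d
    have g1 := congrArg (Nat.cast : ℕ → ℂ) g0
    push_cast [Nat.cast_sub hd] at g1
    linear_combination g1 / 2
  have hzero : (∑ v ∈ range d, ((v:ℂ) - c) * Ed d (-(0:ℤ) * v)) * Ed d ((0:ℤ) * u) = 0 := by
    have : ∀ v ∈ range d, ((v:ℂ) - c) * Ed d (-(0:ℤ) * v) = (v:ℂ) - c := by
      intro v _
      simp [Ed_zero]
    rw [Finset.sum_congr rfl this, Finset.sum_sub_distrib, gauss, Finset.sum_const,
      Finset.card_range]
    have h0 : Ed d ((0:ℤ) * u) = 1 := by norm_num [Ed_zero]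
    rw [h0, mul_one, nsmul_eq_mul, hc]
    ring
  -- the k ∈ [1,d) coefficients
  have coeffs : ∀ k ∈ Ico 1 d,
      (∑ v ∈ range d, ((v:ℂ) - c) * Ed d (-(k:ℤ) * v)) * Ed d ((k:ℤ) * u)
      = (d:ℂ) * (Ed d ((k:ℤ) * ((u:ℤ) + 1)) / (1 - Ed d k)) := by
    intro k hk
    have hnd : ¬ (d:ℤ) ∣ (k:ℤ) := not_dvd_of_Ico d hk
    have hndneg : ¬ (d:ℤ) ∣ (-(k:ℤ)) := fun hh => hnd ((dvd_neg).1 hh)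
    set y : ℂ := Ed d (-(k:ℤ)) with hy
    have hy1 : y ≠ 1 := fun hh => hndneg ((Ed_eq_one_iff d hd _).1 hh)
    have hyd : y ^ d = 1 := by
      rw [hy, Ed_pow]
      exact (Ed_eq_one_iff d hd _).2 ⟨-(k:ℤ), by ring⟩
    have hsum : (∑ v ∈ range d, ((v:ℂ) - c) * Ed d (-(k:ℤ) * v)) = (d:ℂ) / (y - 1) := by
      have e1 : ∀ v ∈ range d, ((v:ℂ) - c) * Ed d (-(k:ℤ) * v) = (v:ℂ) * y ^ v - c * y ^ v := by
        intro v _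
        rw [hy, Ed_pow]
        ring
      rw [Finset.sum_congr rfl e1, Finset.sum_sub_distrib, ← Finset.mul_sum]
      rw [wgeom y d hy1 hyd, geom_sum_eq hy1, hyd]
      simp
    rw [hsum]
    -- now : d/(y-1) * Ed(k u) = d * Ed(k(u+1))/(1 - Ed k)
    have hky : Ed d (k:ℤ) * y = 1 := Ed_mul_neg d k
    have hne1 : (1:ℂ) - Ed d (k:ℤ) ≠ 0 := Ed_ne_one d hd hnd
    have hyne : y - 1 ≠ 0 := sub_ne_zero.2 hy1
    have hEu : Ed d ((k:ℤ) * ((u:ℤ) + 1)) = Ed d ((k:ℤ) * u) * Ed d (k:ℤ) := by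
      rw [show (k:ℤ) * ((u:ℤ) + 1) = (k:ℤ) * u + k by ring, Ed_add]
    rw [hEu]
    field_simp
    linear_combination (-Ed d ((k:ℤ) * u)) * hky
  -- assemble
  have split := Finset.sum_range_eq_add_Ico
    (fun k => (∑ v ∈ range d, ((v:ℂ) - c) * Ed d (-(k:ℤ) * v)) * Ed d ((k:ℤ) * u)) hd
  rw [split] at key
  push_cast at hzero key
  rw [hzero, zero_add, Finset.sum_congr rfl coeffs, ← Finset.mul_sum] at key
  exact (mul_left_cancel₀ hdC key).symm

lemma int_eq_of_dvd (d : ℕ) {a b : ℤ} (ha : 0 ≤ a) (ha2 : a < d) (hb : 0 ≤ b)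
    (hb2 : b < d) (hdvd : (d:ℤ) ∣ a - b) : a = b := by
  rcases hdvd with ⟨t, ht⟩
  rcases lt_trichotomy t 0 with hh | hh | hh
  · nlinarith
  · subst hh; omega
  · nlinarith

lemma ee_eq_Ed (d : ℕ) (a : ℕ) (b : ℤ) : ee ((a : ℝ) * (b : ℝ) / d) = Ed d ((a:ℤ) * b) := by
  rw [ee, Ed]
  congr 1
  push_cast
  ring

lemma ee_neg_eq_Ed (d : ℕ) (a : ℕ) : ee (-(a : ℝ) / d) = Ed d (-(a:ℤ)) := by
  rw [ee, Ed]
  congr 1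
  push_cast
  ring

lemma main_sum (d : ℕ) (hd : 0 < d) (h : ℤ) (hcop : Int.gcd h d = 1) (s : ℤ) :
    ∑ u ∈ range d, ((((h * u + s) % d : ℤ) : ℂ) - ((d:ℂ) - 1) / 2) * ((u : ℂ) - ((d:ℂ) - 1) / 2)
      = (d:ℂ) * phi h d s := by
  have hdC : (d:ℂ) ≠ 0 := Nat.cast_ne_zero.2 hd.ne'
  have hdZ : (d:ℤ) ≠ 0 := by exact_mod_cast hd.ne'
  have hcop' : IsCoprime (d:ℤ) h := by
    rw [Int.isCoprime_iff_gcd_eq_one, Int.gcd_comm]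
    exact hcop
  -- notation
  set c : ℂ := ((d:ℂ) - 1) / 2 with hc
  -- the residue
  have hrdvd : ∀ u : ℕ, (d:ℤ) ∣ ((h * u + s) % d - (h * u + s)) := by
    intro u
    exact ⟨-((h * u + s) / d), by rw [Int.emod_def]; ring⟩
  -- Step 1 : expand both factors by sawtooth
  have step1 : ∀ u ∈ range d,
      ((((h * u + s) % d : ℤ) : ℂ) - c) * ((u : ℂ) - c)
      = ∑ k ∈ Ico 1 d, ∑ j ∈ Ico 1 d,
          (Ed d ((k:ℤ) * (h * u + s) + k) / (1 - Ed d k)) *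
            (Ed d ((j:ℤ) * ((u:ℤ) + 1)) / (1 - Ed d j)) := by
    intro u hu
    rw [mem_range] at hu
    -- second factor
    have hA : (u : ℂ) - c = ∑ j ∈ Ico 1 d, Ed d ((j:ℤ) * ((u:ℤ) + 1)) / (1 - Ed d j) :=
      sawtooth d hd u hu
    -- first factor
    set v : ℕ := ((h * u + s) % d).toNat with hv
    have hv1 : ((v:ℤ)) = (h * u + s) % d :=
      Int.toNat_of_nonneg (Int.emod_nonneg _ hdZ)
    have hv2 : v < d := by
      have := Int.emod_lt_of_pos (h * u + s) (show (0:ℤ) < (d:ℤ) by exact_mod_cast hd)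
      omega
    have hB0 : (v : ℂ) - c = ∑ k ∈ Ico 1 d, Ed d ((k:ℤ) * ((v:ℤ) + 1)) / (1 - Ed d k) :=
      sawtooth d hd v hv2
    have hvC : ((((h * u + s) % d : ℤ)) : ℂ) = (v : ℂ) := by
      rw [← hv1]; push_cast; ring
    have hB : ((((h * u + s) % d : ℤ)) : ℂ) - c
        = ∑ k ∈ Ico 1 d, Ed d ((k:ℤ) * (h * u + s) + k) / (1 - Ed d k) := by
      rw [hvC, hB0]
      refine Finset.sum_congr rfl fun k _ => ?_
      congr 1
      refine Ed_congr d hd ?_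
      have : (k:ℤ) * ((v:ℤ) + 1) - ((k:ℤ) * (h * u + s) + k) = k * ((v:ℤ) - (h * u + s)) := by
        ring
      rw [this, hv1]
      exact Dvd.dvd.mul_left (hrdvd u) k
    rw [hA, hB, Finset.sum_mul_sum]
  rw [Finset.sum_congr rfl step1]
  -- Step 2 : rewrite each summand to isolate the u-dependence
  have step2 : ∀ u ∈ range d, ∀ k ∈ Ico 1 d, ∀ j ∈ Ico 1 d,
      (Ed d ((k:ℤ) * (h * u + s) + k) / (1 - Ed d k)) *
        (Ed d ((j:ℤ) * ((u:ℤ) + 1)) / (1 - Ed d j))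
      = Ed d (((j:ℤ) + k * h) * u) *
          (Ed d ((k:ℤ) * s) * Ed d (k:ℤ) * Ed d (j:ℤ) / ((1 - Ed d k) * (1 - Ed d j))) := by
    intro u _ k _ j _
    have hnum : Ed d ((k:ℤ) * (h * u + s) + k) * Ed d ((j:ℤ) * ((u:ℤ) + 1))
        = Ed d (((j:ℤ) + k * h) * u) * (Ed d ((k:ℤ) * s) * Ed d (k:ℤ) * Ed d (j:ℤ)) := by
      simp only [← Ed_add]
      exact congrArg (Ed d) (by ring)
    rw [div_mul_div_comm, hnum, mul_div_assoc]
  have step2' : ∀ u ∈ range d,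
      (∑ k ∈ Ico 1 d, ∑ j ∈ Ico 1 d,
        (Ed d ((k:ℤ) * (h * u + s) + k) / (1 - Ed d k)) *
          (Ed d ((j:ℤ) * ((u:ℤ) + 1)) / (1 - Ed d j)))
      = ∑ k ∈ Ico 1 d, ∑ j ∈ Ico 1 d,
          Ed d (((j:ℤ) + k * h) * u) *
            (Ed d ((k:ℤ) * s) * Ed d (k:ℤ) * Ed d (j:ℤ) / ((1 - Ed d k) * (1 - Ed d j))) := by
    intro u hu
    exact Finset.sum_congr rfl fun k hk => Finset.sum_congr rfl fun j hj =>
      step2 u hu k hk j hj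
  rw [Finset.sum_congr rfl step2']
  -- Step 3 : swap the u-sum inside
  rw [Finset.sum_comm]
  have step3 : ∀ k ∈ Ico 1 d,
      (∑ u ∈ range d, ∑ j ∈ Ico 1 d,
        Ed d (((j:ℤ) + k * h) * u) *
          (Ed d ((k:ℤ) * s) * Ed d (k:ℤ) * Ed d (j:ℤ) / ((1 - Ed d k) * (1 - Ed d j))))
      = ∑ j ∈ Ico 1 d,
          (if (d:ℤ) ∣ ((j:ℤ) + k * h) then (d:ℂ) else 0) *
            (Ed d ((k:ℤ) * s) * Ed d (k:ℤ) * Ed d (j:ℤ) / ((1 - Ed d k) * (1 - Ed d j))) := by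
    intro k _
    rw [Finset.sum_comm]
    refine Finset.sum_congr rfl fun j _ => ?_
    rw [← Finset.sum_mul, Ed_ortho d hd]
  rw [Finset.sum_congr rfl step3]
  -- Step 4 : collapse the j-sum
  have step4 : ∀ k ∈ Ico 1 d,
      (∑ j ∈ Ico 1 d,
        (if (d:ℤ) ∣ ((j:ℤ) + k * h) then (d:ℂ) else 0) *
          (Ed d ((k:ℤ) * s) * Ed d (k:ℤ) * Ed d (j:ℤ) / ((1 - Ed d k) * (1 - Ed d j))))
      = (d:ℂ) * (ee ((k : ℝ) * (s : ℝ) / d) /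
          ((1 - ee ((k : ℝ) * (h : ℝ) / d)) * (1 - ee (-(k : ℝ) / d)))) := by
    intro k hk
    have hkIco := mem_Ico.1 hk
    -- the unique j
    set j0 : ℤ := (-((k:ℤ) * h)) % d with hj0
    have hj0nn : 0 ≤ j0 := Int.emod_nonneg _ hdZ
    have hj0lt : j0 < d := Int.emod_lt_of_pos _ (by exact_mod_cast hd)
    have hj0dvd : (d:ℤ) ∣ j0 - (-((k:ℤ) * h)) :=
      ⟨-((-((k:ℤ) * h)) / d), by rw [hj0, Int.emod_def]; ring⟩
    have hb0 : (d:ℤ) ∣ j0 + (k:ℤ) * h := by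
      have := hj0dvd
      rwa [show j0 - -((k:ℤ) * h) = j0 + (k:ℤ) * h by ring] at this
    have hj0ne : j0 ≠ 0 := by
      intro hz
      have hz' := hb0
      rw [hz, zero_add] at hz'
      exact not_dvd_of_Ico d hk (hcop'.dvd_of_dvd_mul_right hz')
    set j0n : ℕ := j0.toNat with hj0n
    have hj0n1 : (j0n : ℤ) = j0 := Int.toNat_of_nonneg hj0nn
    have hj0mem : j0n ∈ Ico 1 d := by
      rw [mem_Ico]
      omega
    have hiff : ∀ j ∈ Ico 1 d, ((d:ℤ) ∣ ((j:ℤ) + k * h) ↔ j = j0n) := by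
      intro j hj
      have hjIco := mem_Ico.1 hj
      constructor
      · intro hdvd
        have h1 : (d:ℤ) ∣ ((j:ℤ) - j0) := by
          have := dvd_sub hdvd hb0
          rwa [show ((j:ℤ) + (k:ℤ) * h) - (j0 + (k:ℤ) * h) = (j:ℤ) - j0 by ring] at this
        have : (j:ℤ) = j0 := int_eq_of_dvd d (by positivity) (by exact_mod_cast hjIco.2) hj0nn hj0lt h1
        omega
      · rintro rfl
        rw [hj0n1]
        exact hb0
    have collapse : (∑ j ∈ Ico 1 d,
        (if (d:ℤ) ∣ ((j:ℤ) + k * h) then (d:ℂ) else 0) *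
          (Ed d ((k:ℤ) * s) * Ed d (k:ℤ) * Ed d (j:ℤ) / ((1 - Ed d k) * (1 - Ed d j))))
        = (d:ℂ) * (Ed d ((k:ℤ) * s) * Ed d (k:ℤ) * Ed d (j0n:ℤ) /
            ((1 - Ed d k) * (1 - Ed d j0n))) := by
      have e1 : ∀ j ∈ Ico 1 d,
          (if (d:ℤ) ∣ ((j:ℤ) + k * h) then (d:ℂ) else 0) *
            (Ed d ((k:ℤ) * s) * Ed d (k:ℤ) * Ed d (j:ℤ) / ((1 - Ed d k) * (1 - Ed d j)))
          = if j = j0n then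
              (d:ℂ) * (Ed d ((k:ℤ) * s) * Ed d (k:ℤ) * Ed d (j:ℤ) /
                ((1 - Ed d k) * (1 - Ed d j))) else 0 := by
        intro j hj
        rw [if_congr (hiff j hj) rfl rfl]
        split_ifs with hh
        · ring
        · ring
      rw [Finset.sum_congr rfl e1, Finset.sum_ite_eq' (Ico 1 d) j0n, if_pos hj0mem]
    rw [collapse]
    -- final per-k identity
    have hEj0 : Ed d (j0n:ℤ) = Ed d (-((k:ℤ) * h)) := by
      refine Ed_congr d hd ?_
      rw [hj0n1]
      exact hj0dvd
    rw [hEj0, ee_eq_Ed, ee_eq_Ed, ee_neg_eq_Ed]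
    -- Ed values
    have hdk : ¬ (d:ℤ) ∣ (k:ℤ) := not_dvd_of_Ico d hk
    have hdkh : ¬ (d:ℤ) ∣ ((k:ℤ) * h) := fun hh => hdk (hcop'.dvd_of_dvd_mul_right hh)
    have hne1 : (1:ℂ) - Ed d (k:ℤ) ≠ 0 := Ed_ne_one d hd hdk
    have hne2 : (1:ℂ) - Ed d (-(k:ℤ)) ≠ 0 := Ed_ne_one d hd (by rwa [dvd_neg])
    have hne3 : (1:ℂ) - Ed d ((k:ℤ) * h) ≠ 0 := Ed_ne_one d hd hdkh
    have hne4 : (1:ℂ) - Ed d (-((k:ℤ) * h)) ≠ 0 := Ed_ne_one d hd (by rwa [dvd_neg])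
    have h1 : Ed d ((k:ℤ) * h) * Ed d (-((k:ℤ) * h)) = 1 := Ed_mul_neg d _
    have h2 : Ed d (k:ℤ) * Ed d (-(k:ℤ)) = 1 := Ed_mul_neg d _
    congr 1
    rw [div_eq_div_iff (by exact mul_ne_zero hne1 hne4) (by exact mul_ne_zero hne3 hne2)]
    linear_combination (Ed d ((k:ℤ) * s) * (Ed d (k:ℤ) * Ed d (-(k:ℤ)) - Ed d (k:ℤ))) * h1
      + (Ed d ((k:ℤ) * s) * (1 - Ed d (-((k:ℤ) * h)))) * h2
  rw [Finset.sum_congr rfl step4, ← Finset.mul_sum, phi]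

theorem phi_eq_real_sum (d : ℕ) (hd : 1 ≤ d) (h : ℤ) (hcop : Int.gcd h d = 1) (s : ℤ) :
    phi h d s =
      ((d : ℝ) * ∑ u ∈ Finset.range d,
        ((u : ℝ) / d - ((d : ℝ) - 1) / (2 * d)) *
          (Int.fract (((h : ℝ) * u + (s : ℝ)) / d) - ((d : ℝ) - 1) / (2 * d)) : ℝ) := by
  have hd0 : 0 < d := hd
  have hdC : (d:ℂ) ≠ 0 := Nat.cast_ne_zero.2 hd0.ne'
  have hfract : ∀ u ∈ range d,
      ((u : ℝ) / d - ((d : ℝ) - 1) / (2 * d)) *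
        (Int.fract (((h : ℝ) * u + (s : ℝ)) / d) - ((d : ℝ) - 1) / (2 * d))
      = ((u : ℝ) / d - ((d : ℝ) - 1) / (2 * d)) *
          ((((h * u + s) % d : ℤ) : ℝ) / d - ((d : ℝ) - 1) / (2 * d)) := by
    intro u _
    congr 2
    have e : ((h:ℝ) * u + (s:ℝ)) = (((h * u + s : ℤ)) : ℝ) := by push_cast; ring
    rw [e, Int.fract_div_intCast_eq_div_intCast_mod]
  rw [Finset.sum_congr rfl hfract]
  push_cast
  have hfac : ∀ u ∈ range d,
      ((u : ℂ) / d - ((d : ℂ) - 1) / (2 * d)) *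
        ((((h * u + s) % d : ℤ) : ℂ) / d - ((d : ℂ) - 1) / (2 * d))
      = (1 / (d:ℂ)^2) *
          (((((h * u + s) % d : ℤ) : ℂ) - ((d:ℂ) - 1) / 2) * ((u : ℂ) - ((d:ℂ) - 1) / 2)) := by
    intro u _
    field_simp
  rw [Finset.sum_congr rfl hfac, ← Finset.mul_sum, main_sum d hd0 h hcop s]
  field_simp
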